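/- arXiv:0711.4210 — 2 statements merged into one kernel-verified Lean document; each statement's English description precedes it below -/
import Mathlib

section
/- Let G = H ⋊ T be a finite group with T a p-group, and let Q ⊴ H be a T-invariant normal subgroup of H whose order is coprime to p. Then C_H(T)Q/Q = C_{H/Q}(T); that is, every T-fixed point of H/Q lifts to a T-fixed point of H. -/
theorem fixed_points_lift_mod_coprime_normal {H T : Type*} [Group H] [Finite H]
    [Group T] [Finite T] (p : ℕ) (hp : p.Prime)
    (φ : T →* MulAut H) (hT : IsPGroup p T)
    (Q : Subgroup H) [Q.Normal]
    (hQinv : ∀ t : T, ∀ q ∈ Q, φ t q ∈ Q)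
    (hQcop : (Nat.card Q).Coprime p) :
    ∀ x : H ⧸ Q,
      (∀ t : T, QuotientGroup.map Q Q ((φ t).toMonoidHom) (fun q hq => hQinv t q hq) x = x) ↔
        ∃ h : H, (∀ t : T, φ t h = h) ∧ QuotientGroup.mk h = x := by
  intro x
  constructor
  · intro hfix
    obtain ⟨h0, rfl⟩ := x.exists_rep
    set α := {h : H // (QuotientGroup.mk h : H ⧸ Q) = QuotientGroup.mk h0} with hα
    have hmem : ∀ (t : T) (a : α), (QuotientGroup.mk (φ t a.1) : H ⧸ Q) = QuotientGroup.mk h0 := by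
      intro t a
      calc (QuotientGroup.mk (φ t a.1) : H ⧸ Q)
          = QuotientGroup.map Q Q ((φ t).toMonoidHom) (fun q hq => hQinv t q hq)
              (QuotientGroup.mk a.1) := rfl
        _ = QuotientGroup.mk h0 := by rw [a.2, hfix t]
    letI : SMul T α := ⟨fun t a => ⟨φ t a.1, hmem t a⟩⟩
    letI : MulAction T α :=
      { one_smul := fun a => Subtype.ext (by show φ 1 a.1 = a.1; simp)
        mul_smul := fun t s a => Subtype.ext (by show φ (t * s) a.1 = φ t (φ s a.1); simp) }
    have hcard : Nat.card α = Nat.card Q := by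
      apply Nat.card_congr
      refine ⟨fun a => ⟨h0⁻¹ * a.1, ?_⟩, fun q => ⟨h0 * q.1, ?_⟩, fun a => ?_, fun q => ?_⟩
      · exact (QuotientGroup.eq).mp a.2.symm
      · exact ((QuotientGroup.eq).mpr (by simp [q.2])).symm
      · exact Subtype.ext (by group)
      · exact Subtype.ext (by simp)
    have hnd : ¬ p ∣ Nat.card α := by
      rw [hcard]
      exact (Nat.Prime.coprime_iff_not_dvd hp).mp hQcop.symm
    haveI : Fact p.Prime := ⟨hp⟩
    obtain ⟨a, ha⟩ := hT.nonempty_fixed_point_of_prime_not_dvd_card α hnd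
    refine ⟨a.1, fun t => ?_, a.2⟩
    exact congrArg Subtype.val (ha t)
  · rintro ⟨h, hh, rfl⟩ t
    show QuotientGroup.mk (φ t h) = QuotientGroup.mk h
    rw [hh t]
end

section
/- Let q be an odd prime, V a finite-dimensional vector space over 𝔽_q, and W a finite group acting linearly on V with |W| < q. If V is a W-invariant direct sum V = R₁ ⊕ R₂ of nonzero subspaces, and I ⊆ W is a conjugation-closed generating set of involutions each acting on V as a reflection (fixed space of codimension 1), then for each r ∈ I the (−1)-eigenspace [V, r] is contained in R₁ or in R₂, and r acts as the identity on the other summand. -/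
theorem reflection_eigenspace_localization (q : ℕ) (hq : q.Prime) (hodd : q ≠ 2)
    [Fact q.Prime] {V : Type*} [AddCommGroup V] [Module (ZMod q) V]
    [FiniteDimensional (ZMod q) V]
    {W : Type*} [Group W] [Finite W] (hWq : Nat.card W < q)
    (ρ : W →* (V ≃ₗ[ZMod q] V))
    (R₁ R₂ : Submodule (ZMod q) V) (hR₁ : R₁ ≠ ⊥) (hR₂ : R₂ ≠ ⊥)
    (hcompl : IsCompl R₁ R₂)
    (hinv1 : ∀ w : W, ∀ v ∈ R₁, ρ w v ∈ R₁) (hinv2 : ∀ w : W, ∀ v ∈ R₂, ρ w v ∈ R₂)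
    (I : Set W) (hIconj : ∀ w : W, ∀ i ∈ I, w * i * w⁻¹ ∈ I)
    (hIgen : Subgroup.closure I = ⊤)
    (hIinvol : ∀ i ∈ I, i ≠ 1 ∧ i * i = 1)
    (hIrefl : ∀ i ∈ I, Module.finrank (ZMod q)
        (LinearMap.ker ((ρ i).toLinearMap - LinearMap.id)) + 1 = Module.finrank (ZMod q) V) :
    ∀ r ∈ I,
      (LinearMap.range ((ρ r).toLinearMap - LinearMap.id) ≤ R₁ ∧ ∀ v ∈ R₂, ρ r v = v) ∨
      (LinearMap.range ((ρ r).toLinearMap - LinearMap.id) ≤ R₂ ∧ ∀ v ∈ R₁, ρ r v = v) := by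
  intro r hr
  set f : V →ₗ[ZMod q] V := (ρ r).toLinearMap - LinearMap.id with hf
  -- involution
  have hinvol : ∀ v : V, ρ r (ρ r v) = v := by
    intro v
    have h := (hIinvol r hr).2
    have : ρ (r * r) v = ρ 1 v := by rw [h]
    simpa [map_mul] using this
  have h2ne : (2 : ZMod q) ≠ 0 := by
    intro h
    have hdvd : (q : ℕ) ∣ 2 :=
      (ZMod.natCast_eq_zero_iff 2 q).mp (by exact_mod_cast h)
    exact hodd ((Nat.prime_dvd_prime_iff_eq hq Nat.prime_two).mp hdvd)
  -- the (-1)-eigenspace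
  set E : Submodule (ZMod q) V := LinearMap.ker ((ρ r).toLinearMap + LinearMap.id) with hE
  have hmemE : ∀ v : V, v ∈ E ↔ ρ r v = -v := by
    intro v
    simp [hE, LinearMap.mem_ker, add_eq_zero_iff_eq_neg]
  have hrange_le_E : LinearMap.range f ≤ E := by
    rintro x ⟨v, rfl⟩
    rw [hmemE]
    simp only [hf, LinearMap.sub_apply, LinearMap.id_apply, LinearEquiv.coe_coe, map_sub,
      hinvol]
    abel
  -- E and ker f are disjoint
  have hdisj : Disjoint E (LinearMap.ker f) := by
    rw [disjoint_iff]
    rw [Submodule.eq_bot_iff]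
    intro v hv
    have h1 : ρ r v = -v := (hmemE v).mp hv.1
    have h2 : ρ r v = v := by
      have := hv.2
      simpa [hf, LinearMap.mem_ker, sub_eq_zero] using this
    have : (2 : ZMod q) • v = 0 := by
      rw [h2] at h1
      rw [eq_neg_iff_add_eq_zero] at h1
      rw [two_smul]
      exact h1
    rcases smul_eq_zero.mp this with h | h
    · exact absurd h h2ne
    · exact h
  have hkerdim := hIrefl r hr
  rw [← hf] at hkerdim
  have hrank := LinearMap.finrank_range_add_finrank_ker f
  have hrange1 : Module.finrank (ZMod q) (LinearMap.range f) = 1 := by omega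
  have hEle1 : Module.finrank (ZMod q) E ≤ 1 := by
    have h1 := Submodule.finrank_sup_add_finrank_inf_eq E (LinearMap.ker f)
    rw [disjoint_iff.mp hdisj] at h1
    have h2 : Module.finrank (ZMod q) ↥(E ⊔ LinearMap.ker f) ≤ Module.finrank (ZMod q) V :=
      Submodule.finrank_le _
    simp [finrank_bot] at h1
    omega
  have hEeq : E = LinearMap.range f := by
    have := Submodule.eq_of_le_of_finrank_le hrange_le_E (by omega)
    exact this.symm
  have hEdim : Module.finrank (ZMod q) E = 1 := by rw [hEeq]; exact hrange1
  -- pick nonzero e ∈ E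
  have hEne : E ≠ ⊥ := by
    intro h
    rw [h] at hEdim
    simp [finrank_bot] at hEdim
  obtain ⟨e, heE, hene⟩ := Submodule.exists_mem_ne_zero_of_ne_bot hEne
  -- decompose e
  have : e ∈ R₁ ⊔ R₂ := by rw [hcompl.sup_eq_top]; trivial
  rw [Submodule.mem_sup] at this
  obtain ⟨e₁, he₁, e₂, he₂, hsum⟩ := this
  -- e₁, e₂ are in E
  have hre : ρ r e = -e := (hmemE e).mp heE
  have hcomp : ρ r e₁ + e₁ = -(ρ r e₂ + e₂) := by
    have : ρ r (e₁ + e₂) = -(e₁ + e₂) := by rw [hsum]; exact hre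
    rw [map_add] at this
    linear_combination (norm := module) this
  have hz : ρ r e₁ + e₁ = 0 := by
    have hm1 : ρ r e₁ + e₁ ∈ R₁ := R₁.add_mem (hinv1 r e₁ he₁) he₁
    have hm2 : ρ r e₁ + e₁ ∈ R₂ := by
      rw [hcomp]; exact R₂.neg_mem (R₂.add_mem (hinv2 r e₂ he₂) he₂)
    have := hcompl.disjoint
    rw [disjoint_iff, Submodule.eq_bot_iff] at this
    exact this _ ⟨hm1, hm2⟩
  have he₁E : e₁ ∈ E := (hmemE e₁).mpr (eq_neg_of_add_eq_zero_left hz)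
  have he₂E : e₂ ∈ E := by
    rw [hmemE]
    have : ρ r e₂ + e₂ = 0 := by
      rw [hcomp] at hz
      linear_combination (norm := module) -hz
    linear_combination (norm := module) this
  -- key lemma: if a nonzero element of E lies in a submodule R, then E ≤ R
  have key : ∀ (R : Submodule (ZMod q) V) (x : V), x ∈ E → x ∈ R → x ≠ 0 → E ≤ R := by
    intro R x hxE hxR hxne
    have hspan : Submodule.span (ZMod q) {x} ≤ E := by
      rw [Submodule.span_singleton_le_iff_mem]; exact hxE
    have hsdim : Module.finrank (ZMod q) (Submodule.span (ZMod q) {x}) = 1 :=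
      finrank_span_singleton hxne
    have : Submodule.span (ZMod q) {x} = E :=
      Submodule.eq_of_le_of_finrank_le hspan (by omega)
    rw [← this, Submodule.span_singleton_le_iff_mem]
    exact hxR
  by_cases h1 : e₁ = 0
  · -- e = e₂ ≠ 0, E ≤ R₂
    have he₂ne : e₂ ≠ 0 := by
      intro h; apply hene; rw [← hsum, h1, h]; simp
    have hER : E ≤ R₂ := key R₂ e₂ he₂E he₂ he₂ne
    right
    constructor
    · exact hEeq.symm.trans_le hER
    · intro v hv
      have hmem : ρ r v - v ∈ LinearMap.range f := ⟨v, rfl⟩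
      have hm2 : ρ r v - v ∈ R₂ := hER (hrange_le_E hmem)
      have hm1 : ρ r v - v ∈ R₁ := R₁.sub_mem (hinv1 r v hv) hv
      have hd := hcompl.disjoint
      rw [disjoint_iff, Submodule.eq_bot_iff] at hd
      have := hd _ ⟨hm1, hm2⟩
      rwa [sub_eq_zero] at this
  · have hER : E ≤ R₁ := key R₁ e₁ he₁E he₁ h1
    left
    constructor
    · exact hEeq.symm.trans_le hER
    · intro v hv
      have hmem : ρ r v - v ∈ LinearMap.range f := ⟨v, rfl⟩
      have hm1 : ρ r v - v ∈ R₁ := hER (hrange_le_E hmem)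
      have hm2 : ρ r v - v ∈ R₂ := R₂.sub_mem (hinv2 r v hv) hv
      have hd := hcompl.disjoint
      rw [disjoint_iff, Submodule.eq_bot_iff] at hd
      have := hd _ ⟨hm1, hm2⟩
      rwa [sub_eq_zero] at this
end
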